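/- Let G be a connected graph whose block tree T can be rooted so that every maximal biconnected component of G belongs to c-AND(1) and every cut-vertex is safe in each of its descendant blocks. Then G belongs to c-AND(1). -/

import Mathlib

/-- An `AND(1)`-realization of `G`: each vertex `v` gets a closed interval
`[L v, R v]` and a representative point `p v` in it, with adjacency of distinct
vertices iff mutual containment of the representative points. -/
def IsAND1Real {V : Type*} (G : SimpleGraph V) (L R p : V → ℝ) : Prop :=
  (∀ v, L v ≤ p v ∧ p v ≤ R v) ∧
    ∀ u v : V, u ≠ v →
      (G.Adj u v ↔ L u ≤ p v ∧ p v ≤ R u ∧ L v ≤ p u ∧ p u ≤ R v)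

/-- A central (`c`-)`AND(1)`-realization: moreover each representative point is
the midpoint of its interval. -/
def IsCAND1Real {V : Type*} (G : SimpleGraph V) (L R p : V → ℝ) : Prop :=
  IsAND1Real G L R p ∧ ∀ v, p v = (L v + R v) / 2

/-- The class `AND(1)`. -/
def InAND1 {V : Type*} (G : SimpleGraph V) : Prop :=
  ∃ L R p : V → ℝ, IsAND1Real G L R p

/-- The class `c-AND(1)`. -/
def InCAND1 {V : Type*} (G : SimpleGraph V) : Prop :=
  ∃ L R p : V → ℝ, IsCAND1Real G L R p

/-- A linear ordering of the vertices (an injective map to `ℝ`) satisfying the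
four point condition: `x < u < v < y` with `xv, uy ∈ E` implies `uv ∈ E`. -/
def FourPointCond {V : Type*} (G : SimpleGraph V) (f : V → ℝ) : Prop :=
  Function.Injective f ∧
    ∀ x u v y : V, f x < f u → f u < f v → f v < f y →
      G.Adj x v → G.Adj u y → G.Adj u v

/-- A vertex `v` is safe in `G` (for `c-AND(1)`) if some
`c-AND(1)`-realization of `G` has `p v ∈ B w` only when `w = v` or
`vw ∈ E(G)`. -/
def SafeCAND1 {V : Type*} (G : SimpleGraph V) (v : V) : Prop :=
  ∃ L R p : V → ℝ, IsCAND1Real G L R p ∧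
    ∀ w, L w ≤ p v → p v ≤ R w → w = v ∨ G.Adj v w

/-- `S` induces a biconnected subgraph of `G`: the induced subgraph is
connected and remains connected after deleting any single vertex. -/
def IsBiconnSet {V : Type*} (G : SimpleGraph V) (S : Set V) : Prop :=
  (SimpleGraph.induce S G).Connected ∧
    ∀ v ∈ S, (SimpleGraph.induce (S \ {v}) G).Connected

/-- `S` is a block of `G`: a maximal biconnected set of vertices. -/
def IsBlockSet {V : Type*} (G : SimpleGraph V) (S : Set V) : Prop :=
  IsBiconnSet G S ∧ ∀ T : Set V, IsBiconnSet G T → S ⊆ T → T = S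

/-- If the block tree of a connected graph `G` can be rooted (encoded here by a
breadth-first enumeration `blocks 0, blocks 1, …` of all the blocks, each later
block meeting the union of the earlier ones in exactly one cut-vertex) so that
every maximal biconnected component of `G` belongs to `c-AND(1)` and every
cut-vertex is safe in each of its descendant blocks, then `G` belongs to
`c-AND(1)`. -/
lemma exists_pos_le_all {ι : Type*} [Finite ι] (f : ι → ℝ) (hf : ∀ i, 0 < f i) :
    ∃ ε : ℝ, 0 < ε ∧ ∀ i, ε ≤ f i := by
  cases isEmpty_or_nonempty ι with
  | inl h => exact ⟨1, one_pos, fun i => (h.false i).elim⟩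
  | inr h =>
    have : Fintype ι := Fintype.ofFinite ι
    obtain ⟨x, -, hx⟩ := Finset.exists_min_image Finset.univ f ⟨Classical.arbitrary ι, Finset.mem_univ _⟩
    exact ⟨f x, hf x, fun i => hx i (Finset.mem_univ _)⟩

/-- helper to build positive gap values -/
noncomputable def pos1 (x : ℝ) : ℝ := if 0 < x then x else 1

lemma pos1_pos (x : ℝ) : 0 < pos1 x := by
  unfold pos1; split <;> [assumption; exact one_pos]

lemma le_of_le_pos1 {ε x : ℝ} (h : ε ≤ pos1 x) (hx : 0 < x) : ε ≤ x := by
  unfold pos1 at h; rwa [if_pos hx] at h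

def StrictReal {V : Type*} (L R p : V → ℝ) : Prop :=
  Function.Injective p ∧ (∀ v, L v < R v) ∧
    ∀ u v : V, u ≠ v → L v ≤ p u → p u ≤ R v → L v < p u ∧ p u < R v

lemma strictify {V : Type*} [Fintype V] (G : SimpleGraph V) {L R p : V → ℝ}
    (h : IsCAND1Real G L R p) :
    ∃ L' R' p' : V → ℝ, IsCAND1Real G L' R' p' ∧ StrictReal L' R' p' ∧
      ∀ u v : V, (L' v ≤ p' u ∧ p' u ≤ R' v) ↔ (L v ≤ p u ∧ p u ≤ R v) := by
  classical
  obtain ⟨⟨hin, hadj⟩, hmid⟩ := h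
  set n := Fintype.card V with hn
  let e := (Fintype.equivFin V)
  set q : V → ℝ := fun v => ((e v : ℕ) + 1 : ℝ) / (n + 2) with hq
  have hq0 : ∀ v, 0 < q v := by
    intro v
    apply div_pos (by positivity) (by positivity)
  have hq1 : ∀ v, q v < 1 := by
    intro v
    rw [hq]
    rw [div_lt_one (by positivity)]
    have h2 : ((e v : ℕ) : ℝ) < n := by exact_mod_cast (e v).2
    linarith
  have hqinj : Function.Injective q := by
    intro u v huv
    have h2 : ((e u : ℕ) : ℝ) = ((e v : ℕ) : ℝ) := by
      simp only [hq] at huv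
      rw [div_left_inj' (by positivity), add_left_inj] at huv
      exact_mod_cast huv
    exact e.injective (Fin.ext (Nat.cast_injective h2))
  obtain ⟨ε, hε, hεle⟩ := exists_pos_le_all
    (fun uv : V × V => min (pos1 |p uv.1 - p uv.2|)
      (min (pos1 |p uv.1 - L uv.2|) (pos1 |p uv.1 - R uv.2|)))
    (fun uv => lt_min (pos1_pos _) (lt_min (pos1_pos _) (pos1_pos _)))
  have hP1 : ∀ u v, p u ≠ p v → ε ≤ |p u - p v| := fun u v huv =>
    le_of_le_pos1 (le_trans (hεle (u, v)) (min_le_left _ _)) (abs_pos.2 (sub_ne_zero.2 huv))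
  have hP2 : ∀ u v, p u < L v → ε ≤ L v - p u := by
    intro u v hlt
    have := le_of_le_pos1 (le_trans (hεle (u, v)) (le_trans (min_le_right _ _) (min_le_left _ _)))
      (abs_pos.2 (sub_ne_zero.2 hlt.ne))
    rwa [abs_of_neg (by linarith), neg_sub] at this
  have hP3 : ∀ u v, R v < p u → ε ≤ p u - R v := by
    intro u v hlt
    have := le_of_le_pos1 (le_trans (hεle (u, v)) (le_trans (min_le_right _ _) (min_le_right _ _)))
      (abs_pos.2 (sub_ne_zero.2 hlt.ne'))
    rwa [abs_of_pos (by linarith)] at this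
  set δ := ε / 4 with hδ
  have hδ0 : 0 < δ := by positivity
  have hε4 : ε = 4 * δ := by rw [hδ]; ring
  set L' : V → ℝ := fun v => L v + δ * q v - 2 * δ with hL'
  set R' : V → ℝ := fun v => R v + δ * q v + 2 * δ with hR'
  set p' : V → ℝ := fun v => p v + δ * q v with hp'
  have hLlt : ∀ u v, L v ≤ p u → L' v < p' u := by
    intro u v hle
    have h1 : 0 < δ * (q u - q v + 1) := mul_pos hδ0 (by linarith [hq0 u, hq1 v])
    simp only [hL', hp']
    nlinarith
  have hLgt : ∀ u v, p u < L v → p' u < L' v := by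
    intro u v hlt
    have hgap := hP2 u v hlt
    have h1 : δ * (q u - q v) < δ * 1 := by
      apply mul_lt_mul_of_pos_left _ hδ0
      linarith [hq1 u, hq0 v]
    simp only [hL', hp']
    nlinarith
  have hRlt : ∀ u v, p u ≤ R v → p' u < R' v := by
    intro u v hle
    have h1 : 0 < δ * (q v - q u + 1) := mul_pos hδ0 (by linarith [hq0 v, hq1 u])
    simp only [hR', hp']
    nlinarith
  have hRgt : ∀ u v, R v < p u → R' v < p' u := by
    intro u v hlt
    have hgap := hP3 u v hlt
    have h1 : δ * (q v - q u) < δ * 1 := by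
      apply mul_lt_mul_of_pos_left _ hδ0
      linarith [hq1 v, hq0 u]
    simp only [hR', hp']
    nlinarith
  have hLiff : ∀ u v, (L' v ≤ p' u ↔ L v ≤ p u) := by
    intro u v
    constructor
    · intro hle
      by_contra hcon
      exact absurd hle (not_le.2 (hLgt u v (not_le.1 hcon)))
    · exact fun hle => (hLlt u v hle).le
  have hRiff : ∀ u v, (p' u ≤ R' v ↔ p u ≤ R v) := by
    intro u v
    constructor
    · intro hle
      by_contra hcon
      exact absurd hle (not_le.2 (hRgt u v (not_le.1 hcon)))
    · exact fun hle => (hRlt u v hle).le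
  refine ⟨L', R', p', ⟨⟨fun v => ⟨(hLlt v v (hin v).1).le, (hRlt v v (hin v).2).le⟩,
    fun u v hne => (hadj u v hne).trans (and_congr (hLiff v u)
      (and_congr (hRiff v u) (and_congr (hLiff u v) (hRiff u v)))).symm⟩,
    fun v => by simp only [hp', hL', hR']; rw [hmid v]; ring⟩,
    ⟨?_, ?_, ?_⟩, fun u v => and_congr (hLiff u v) (hRiff u v)⟩
  · intro u v huv
    simp only [hp'] at huv
    by_cases hpc : p u = p v
    · apply hqinj
      have : δ * q u = δ * q v := by linarith
      exact mul_left_cancel₀ hδ0.ne' this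
    · exfalso
      have h1 := hP1 u v hpc
      have h2 : p u - p v = δ * (q v - q u) := by linarith
      have h3 : |q v - q u| < 1 := abs_sub_lt_iff.2 ⟨by linarith [hq1 v, hq0 u], by linarith [hq1 u, hq0 v]⟩
      have h4 : |p u - p v| < δ := by
        rw [h2, abs_mul, abs_of_pos hδ0]
        nlinarith
      linarith
  · intro v
    have := (hin v).1.trans (hin v).2
    simp only [hL', hR']
    linarith
  · intro u v _ h1 h2
    exact ⟨hLlt u v ((hLiff u v).1 h1), hRlt u v ((hRiff u v).1 h2)⟩

section GraphLemmas
variable {V : Type*}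

lemma connected_of_subsingleton {W : Type*} [Subsingleton W] [Nonempty W]
    (H : SimpleGraph W) : H.Connected := by
  constructor
  intro x y
  rw [Subsingleton.elim x y]

lemma edge_biconn (G : SimpleGraph V) {a b : V} (hab : G.Adj a b) :
    IsBiconnSet G {a, b} := by
  have hne : a ≠ b := hab.ne
  constructor
  · have hne2 : Nonempty ({a, b} : Set V) := ⟨⟨a, by simp⟩⟩
    constructor
    intro x y
    by_cases hxy : x = y
    · rw [hxy]
    · have hx := x.2
      have hy := y.2
      simp only [Set.mem_insert_iff, Set.mem_singleton_iff] at hx hy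
      have hadj : ∀ (u w : ({a, b} : Set V)), u.1 = a → w.1 = b →
          (SimpleGraph.induce ({a, b} : Set V) G).Adj u w := by
        intro u w hu hw
        show G.Adj u.1 w.1
        rw [hu, hw]; exact hab
      rcases hx with hx | hx <;> rcases hy with hy | hy
      · exact absurd (Subtype.ext (hx.trans hy.symm)) hxy
      · exact (hadj x y hx hy).reachable
      · exact ((hadj y x hy hx).reachable).symm
      · exact absurd (Subtype.ext (hx.trans hy.symm)) hxy
  · intro v hv
    simp only [Set.mem_insert_iff, Set.mem_singleton_iff] at hv
    have hsub : ∀ w : V, ({a, b} : Set V) \ {w} ⊆ {a, b} := fun w => Set.diff_subset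
    rcases hv with rfl | rfl
    · have he : ({v, b} : Set V) \ {v} = {b} := by
        ext x; simp only [Set.mem_diff, Set.mem_insert_iff, Set.mem_singleton_iff]
        constructor
        · rintro ⟨h1 | h1, h2⟩ <;> tauto
        · rintro rfl; exact ⟨Or.inr rfl, hne.symm⟩
      rw [he]
      have : Nonempty ({b} : Set V) := ⟨⟨b, rfl⟩⟩
      have : Subsingleton ({b} : Set V) := by
        constructor; rintro ⟨x, hx⟩ ⟨y, hy⟩
        simp only [Set.mem_singleton_iff] at hx hy
        exact Subtype.ext (hx.trans hy.symm)
      exact connected_of_subsingleton _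
    · have he : ({a, v} : Set V) \ {v} = {a} := by
        ext x; simp only [Set.mem_diff, Set.mem_insert_iff, Set.mem_singleton_iff]
        constructor
        · rintro ⟨h1 | h1, h2⟩ <;> tauto
        · rintro rfl; exact ⟨Or.inl rfl, hne⟩
      rw [he]
      have : Nonempty ({a} : Set V) := ⟨⟨a, rfl⟩⟩
      have : Subsingleton ({a} : Set V) := by
        constructor; rintro ⟨x, hx⟩ ⟨y, hy⟩
        simp only [Set.mem_singleton_iff] at hx hy
        exact Subtype.ext (hx.trans hy.symm)
      exact connected_of_subsingleton _

lemma exists_block_superset [Fintype V] (G : SimpleGraph V) {S : Set V}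
    (hS : IsBiconnSet G S) : ∃ T, IsBlockSet G T ∧ S ⊆ T := by
  classical
  set 𝒮 : Set (Set V) := {T | IsBiconnSet G T ∧ S ⊆ T} with h𝒮
  have hfin : 𝒮.Finite := Set.toFinite _
  have hne : 𝒮.Nonempty := ⟨S, hS, subset_rfl⟩
  obtain ⟨T, hT, hTmax⟩ := Set.Finite.exists_maximalFor Set.ncard 𝒮 hfin hne
  refine ⟨T, ⟨hT.1, ?_⟩, hT.2⟩
  intro T' hT' hsub
  have hT'mem : T' ∈ 𝒮 := ⟨hT', hT.2.trans hsub⟩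
  have hle : T.ncard ≤ T'.ncard := Set.ncard_le_ncard hsub (Set.toFinite _)
  have := hTmax (j := T') hT'mem hle
  exact (Set.eq_of_subset_of_ncard_le hsub this.ge (Set.toFinite _)).symm

lemma biconn_card_ge [Fintype V] (G : SimpleGraph V) {S : Set V}
    (hS : IsBiconnSet G S) : ∃ a b : V, a ∈ S ∧ b ∈ S ∧ a ≠ b := by
  obtain ⟨⟨a, ha⟩⟩ := hS.1.nonempty
  obtain ⟨⟨b, hb⟩⟩ := (hS.2 a ha).nonempty
  exact ⟨a, b, ha, hb.1, fun h => hb.2 h.symm⟩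

lemma exists_adj (G : SimpleGraph V) (hconn : G.Connected) {v b : V} (hvb : v ≠ b) :
    ∃ x, G.Adj v x := by
  obtain ⟨w⟩ := hconn.preconnected v b
  cases w with
  | nil => exact absurd rfl hvb
  | cons h _ => exact ⟨_, h⟩

end GraphLemmas

set_option maxHeartbeats 2000000 in
lemma glue {V : Type*} [Fintype V] (G : SimpleGraph V) (U S : Set V) (c : V)
    (hcU : c ∈ U) (hcS : c ∈ S) (hcap : U ∩ S = {c})
    (hedge : ∀ u ∈ S, ∀ v ∈ U, u ≠ c → v ≠ c → ¬ G.Adj u v)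
    {L R p : ↥U → ℝ} (hold : IsCAND1Real (SimpleGraph.induce U G) L R p)
    (holds : StrictReal L R p)
    {L' R' p' : ↥S → ℝ} (hnew : IsCAND1Real (SimpleGraph.induce S G) L' R' p')
    (hnews : StrictReal L' R' p')
    (hsafeC : ∀ w, L' w ≤ p' ⟨c, hcS⟩ → p' ⟨c, hcS⟩ ≤ R' w →
      w = ⟨c, hcS⟩ ∨ (SimpleGraph.induce S G).Adj ⟨c, hcS⟩ w) :
    ∃ L₂ R₂ p₂ : ↥(U ∪ S) → ℝ,
      IsCAND1Real (SimpleGraph.induce (U ∪ S) G) L₂ R₂ p₂ ∧ StrictReal L₂ R₂ p₂ := by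
  classical
  obtain ⟨⟨hin, hadj⟩, hmid⟩ := hold
  obtain ⟨hpinj, hLR, hstrict⟩ := holds
  obtain ⟨⟨hin', hadj'⟩, hmid'⟩ := hnew
  obtain ⟨hpinj', hLR', hstrict'⟩ := hnews
  set cU : ↥U := ⟨c, hcU⟩ with hcUdef
  set cS : ↥S := ⟨c, hcS⟩ with hcSdef
  set pc : ℝ := p cU with hpc
  set pc' : ℝ := p' cS with hpc'
  -- basic membership facts
  have hmemc : ∀ x, x ∈ U → x ∈ S → x = c := by
    intro x h1 h2
    have : x ∈ U ∩ S := ⟨h1, h2⟩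
    rwa [hcap, Set.mem_singleton_iff] at this
  -- bound M on the new realization
  obtain ⟨w₀, -, hw₀⟩ := Finset.exists_max_image Finset.univ
    (fun w : ↥S => |p' w - pc'| + |L' w - pc'| + |R' w - pc'|) ⟨cS, Finset.mem_univ _⟩
  set M : ℝ := |p' w₀ - pc'| + |L' w₀ - pc'| + |R' w₀ - pc'| with hM
  have hM0 : 0 ≤ M := by positivity
  have hMp : ∀ w, |p' w - pc'| ≤ M := by
    intro w
    have := hw₀ w (Finset.mem_univ _)
    have h1 : 0 ≤ |L' w - pc'| := abs_nonneg _
    have h2 : 0 ≤ |R' w - pc'| := abs_nonneg _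
    linarith
  have hML : ∀ w, |L' w - pc'| ≤ M := by
    intro w
    have := hw₀ w (Finset.mem_univ _)
    have h1 : 0 ≤ |p' w - pc'| := abs_nonneg _
    have h2 : 0 ≤ |R' w - pc'| := abs_nonneg _
    linarith
  have hMR : ∀ w, |R' w - pc'| ≤ M := by
    intro w
    have := hw₀ w (Finset.mem_univ _)
    have h1 : 0 ≤ |p' w - pc'| := abs_nonneg _
    have h2 : 0 ≤ |L' w - pc'| := abs_nonneg _
    linarith
  -- the gap ε in the old realization around pc
  obtain ⟨ε₀, hε₀, hε₀le⟩ := exists_pos_le_all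
    (fun v : ↥U => min (pos1 |p v - pc|) (min (pos1 |L v - pc|) (pos1 |R v - pc|)))
    (fun v => lt_min (pos1_pos _) (lt_min (pos1_pos _) (pos1_pos _)))
  have hIcU : L cU < pc ∧ pc < R cU := by
    have h1 := hLR cU
    have h2 := hmid cU
    constructor <;> [skip; skip] <;> rw [hpc, h2] <;> linarith
  set ε : ℝ := min ε₀ (min (pc - L cU) (R cU - pc)) with hε
  have hε0 : 0 < ε := lt_min hε₀ (lt_min (by linarith [hIcU.1]) (by linarith [hIcU.2]))
  have hPgap : ∀ v : ↥U, v ≠ cU → ε ≤ |p v - pc| := by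
    intro v hv
    have hne : p v ≠ pc := fun h => hv (hpinj h)
    exact le_trans (min_le_left _ _) (le_of_le_pos1
      (le_trans (hε₀le v) (min_le_left _ _)) (abs_pos.2 (sub_ne_zero.2 hne)))
  have hLgap : ∀ v : ↥U, L v ≠ pc → ε ≤ |L v - pc| := by
    intro v hv
    exact le_trans (min_le_left _ _) (le_of_le_pos1
      (le_trans (hε₀le v) (le_trans (min_le_right _ _) (min_le_left _ _)))
      (abs_pos.2 (sub_ne_zero.2 hv)))
  have hRgap : ∀ v : ↥U, R v ≠ pc → ε ≤ |R v - pc| := by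
    intro v hv
    exact le_trans (min_le_left _ _) (le_of_le_pos1
      (le_trans (hε₀le v) (le_trans (min_le_right _ _) (min_le_right _ _)))
      (abs_pos.2 (sub_ne_zero.2 hv)))
  have hm1 : ε ≤ pc - L cU := le_trans (min_le_right _ _) (min_le_left _ _)
  have hm2 : ε ≤ R cU - pc := le_trans (min_le_right _ _) (min_le_right _ _)
  -- the scaling factor α
  set α : ℝ := ε / (4 * (M + 1)) with hα
  have hα0 : 0 < α := by positivity
  have hαM : α * M ≤ ε / 4 := by
    rw [hα]
    rw [div_mul_eq_mul_div, div_le_div_iff₀ (by positivity) (by norm_num)]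
    nlinarith
  -- membership helpers
  have memS : ∀ v : ↥(U ∪ S), v.1 ∉ U → v.1 ∈ S := fun v h => v.2.resolve_left h
  -- the combined realization
  set p₂ : ↥(U ∪ S) → ℝ := fun v =>
    if h : v.1 ∈ U then p ⟨v.1, h⟩ else α * (p' ⟨v.1, memS v h⟩ - pc') + pc with hp₂
  set L₂ : ↥(U ∪ S) → ℝ := fun v =>
    if h : v.1 ∈ U then L ⟨v.1, h⟩ else α * (L' ⟨v.1, memS v h⟩ - pc') + pc with hL₂
  set R₂ : ↥(U ∪ S) → ℝ := fun v =>
    if h : v.1 ∈ U then R ⟨v.1, h⟩ else α * (R' ⟨v.1, memS v h⟩ - pc') + pc with hR₂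
  have hp₂old : ∀ (v : ↥(U ∪ S)) (h : v.1 ∈ U), p₂ v = p ⟨v.1, h⟩ := by
    intro v h; simp only [hp₂, dif_pos h]
  have hp₂new : ∀ (v : ↥(U ∪ S)) (h : v.1 ∉ U),
      p₂ v = α * (p' ⟨v.1, memS v h⟩ - pc') + pc := by
    intro v h; simp only [hp₂, dif_neg h]
  have hL₂old : ∀ (v : ↥(U ∪ S)) (h : v.1 ∈ U), L₂ v = L ⟨v.1, h⟩ := by
    intro v h; simp only [hL₂, dif_pos h]
  have hL₂new : ∀ (v : ↥(U ∪ S)) (h : v.1 ∉ U),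
      L₂ v = α * (L' ⟨v.1, memS v h⟩ - pc') + pc := by
    intro v h; simp only [hL₂, dif_neg h]
  have hR₂old : ∀ (v : ↥(U ∪ S)) (h : v.1 ∈ U), R₂ v = R ⟨v.1, h⟩ := by
    intro v h; simp only [hR₂, dif_pos h]
  have hR₂new : ∀ (v : ↥(U ∪ S)) (h : v.1 ∉ U),
      R₂ v = α * (R' ⟨v.1, memS v h⟩ - pc') + pc := by
    intro v h; simp only [hR₂, dif_neg h]
  -- order-transfer for the affine map
  have haff : ∀ x y : ℝ, (α * (x - pc') + pc ≤ α * (y - pc') + pc) ↔ x ≤ y := by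
    intro x y
    rw [add_le_add_iff_right, mul_le_mul_iff_right₀ hα0, sub_le_sub_iff_right]
  have hafflt : ∀ x y : ℝ, (α * (x - pc') + pc < α * (y - pc') + pc) ↔ x < y := by
    intro x y
    rw [add_lt_add_iff_right, mul_lt_mul_iff_right₀ hα0, sub_lt_sub_iff_right]
  -- new vertices live in a small ball around pc
  have hnbL : ∀ (v : ↥(U ∪ S)) (h : v.1 ∉ U), pc - ε / 4 ≤ L₂ v := by
    intro v h
    rw [hL₂new v h]
    have h1 := (abs_le.1 (hML ⟨v.1, memS v h⟩)).1
    nlinarith [hαM, hα0.le]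
  have hnbR : ∀ (v : ↥(U ∪ S)) (h : v.1 ∉ U), R₂ v ≤ pc + ε / 4 := by
    intro v h
    rw [hR₂new v h]
    have h1 := (abs_le.1 (hMR ⟨v.1, memS v h⟩)).2
    nlinarith [hαM, hα0.le]
  have hnbp : ∀ (v : ↥(U ∪ S)) (h : v.1 ∉ U),
      pc - ε / 4 ≤ p₂ v ∧ p₂ v ≤ pc + ε / 4 := by
    intro v h
    rw [hp₂new v h]
    have h1 := abs_le.1 (hMp ⟨v.1, memS v h⟩)
    constructor <;> nlinarith [hαM, hα0.le, h1.1, h1.2]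
  -- new points are strictly inside the interval of c
  have hint : ∀ (v : ↥(U ∪ S)) (h : v.1 ∉ U), L cU < p₂ v ∧ p₂ v < R cU := by
    intro v h
    have h1 := hnbp v h
    constructor <;> nlinarith [hm1, hm2, hε0, h1.1, h1.2]
  have hnec : ∀ (v : ↥(U ∪ S)), v.1 ∉ U → v.1 ≠ c := fun v h hc => h (hc ▸ hcU)
  -- key adjacency equivalence for (new, old) pairs
  have key : ∀ x y : ↥(U ∪ S), (hx : x.1 ∉ U) → (hy : y.1 ∈ U) →
      (G.Adj x.1 y.1 ↔ L₂ x ≤ p₂ y ∧ p₂ y ≤ R₂ x ∧ L₂ y ≤ p₂ x ∧ p₂ x ≤ R₂ y) := by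
    intro x y hx hy
    have hxS : x.1 ∈ S := memS x hx
    set x' : ↥S := ⟨x.1, hxS⟩ with hx'
    have hxc : x.1 ≠ c := hnec x hx
    by_cases hyc : y.1 = c
    · -- y is the cut vertex c
      have hyU : (⟨y.1, hy⟩ : ↥U) = cU := Subtype.ext hyc
      have hpy : p₂ y = pc := by rw [hp₂old y hy, hyU]
      have hLy : L₂ y = L cU := by rw [hL₂old y hy, hyU]
      have hRy : R₂ y = R cU := by rw [hR₂old y hy, hyU]
      have hxcS : x' ≠ cS := fun h => hxc (congrArg Subtype.val h)
      have hadjx := hadj' x' cS hxcS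
      have hGadj : G.Adj x.1 y.1 ↔ (SimpleGraph.induce S G).Adj x' cS := by
        rw [hyc]; exact Iff.rfl
      have hpceq : α * (pc' - pc') + pc = pc := by ring
      constructor
      · intro hGA
        obtain ⟨ha1, ha2, ha3, ha4⟩ := hadjx.1 (hGadj.1 hGA)
        refine ⟨?_, ?_, ?_, ?_⟩
        · rw [hpy, hL₂new x hx]
          have h := (haff (L' x') pc').2 ha1
          rwa [hpceq] at h
        · rw [hpy, hR₂new x hx]
          have h := (haff pc' (R' x')).2 ha2
          rwa [hpceq] at h
        · rw [hLy]; exact (hint x hx).1.le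
        · rw [hRy]; exact (hint x hx).2.le
      · rintro ⟨hb1, hb2, -, -⟩
        rw [hpy, hL₂new x hx] at hb1
        rw [hpy, hR₂new x hx] at hb2
        have hc1 : L' x' ≤ pc' := (haff _ _).1 (by rw [hpceq]; exact hb1)
        have hc2 : pc' ≤ R' x' := (haff _ _).1 (by rw [hpceq]; exact hb2)
        rcases hsafeC x' hc1 hc2 with h | h
        · exact absurd (congrArg Subtype.val h) hxc
        · exact hGadj.2 h.symm
    · -- y is an old vertex different from c: no adjacency possible
      have hynec : (⟨y.1, hy⟩ : ↥U) ≠ cU := fun h => hyc (congrArg Subtype.val h)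
      have hgap := hPgap ⟨y.1, hy⟩ hynec
      have hpy : p₂ y = p ⟨y.1, hy⟩ := hp₂old y hy
      apply iff_of_false
      · exact hedge x.1 hxS y.1 hy hxc hyc
      · rintro ⟨hb1, hb2, -, -⟩
        have h1 := hnbL x hx
        have h2 := hnbR x hx
        rw [hpy] at hb1 hb2
        have : |p ⟨y.1, hy⟩ - pc| ≤ ε / 4 := abs_le.2 ⟨by linarith, by linarith⟩
        linarith
  -- full adjacency equivalence
  have adjIff : ∀ x y : ↥(U ∪ S), x ≠ y →
      (G.Adj x.1 y.1 ↔ L₂ x ≤ p₂ y ∧ p₂ y ≤ R₂ x ∧ L₂ y ≤ p₂ x ∧ p₂ x ≤ R₂ y) := by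
    intro x y hne
    have hne1 : x.1 ≠ y.1 := fun h => hne (Subtype.ext h)
    by_cases hx : x.1 ∈ U <;> by_cases hy : y.1 ∈ U
    · -- both old
      rw [hp₂old x hx, hp₂old y hy, hL₂old x hx, hL₂old y hy, hR₂old x hx, hR₂old y hy]
      exact hadj ⟨x.1, hx⟩ ⟨y.1, hy⟩ (fun h => hne1 (congrArg (fun z : ↥U => z.1) h))
    · -- x old, y new: use symmetry via key
      have h := key y x hy hx
      rw [G.adj_comm] at h
      rw [h]
      tauto
    · exact key x y hx hy
    · -- both new
      rw [hp₂new x hx, hp₂new y hy, hL₂new x hx, hL₂new y hy, hR₂new x hx, hR₂new y hy]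
      have h := hadj' ⟨x.1, memS x hx⟩ ⟨y.1, memS y hy⟩ (fun h => hne1 (congrArg (fun z : ↥S => z.1) h))
      rw [show (G.Adj x.1 y.1) = (SimpleGraph.induce S G).Adj ⟨x.1, memS x hx⟩ ⟨y.1, memS y hy⟩ from rfl, h]
      exact and_congr (haff _ _).symm (and_congr (haff _ _).symm
        (and_congr (haff _ _).symm (haff _ _).symm))
  -- no new point coincides with an old point
  have pne : ∀ x y : ↥(U ∪ S), x.1 ∉ U → y.1 ∈ U → p₂ x ≠ p₂ y := by
    intro x y hx hy heq
    by_cases hyc : y.1 = c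
    · have hyU : (⟨y.1, hy⟩ : ↥U) = cU := Subtype.ext hyc
      have hpy : p₂ y = pc := by rw [hp₂old y hy, hyU]
      rw [hp₂new x hx, hpy] at heq
      have h1 : p' ⟨x.1, memS x hx⟩ - pc' = 0 := by
        have := mul_left_cancel₀ hα0.ne' (by linarith : α * (p' ⟨x.1, memS x hx⟩ - pc') = α * 0)
        linarith [this]
      have h2 : (⟨x.1, memS x hx⟩ : ↥S) = cS := hpinj' (by linarith : p' ⟨x.1, memS x hx⟩ = p' cS)
      exact hnec x hx (congrArg Subtype.val h2)
    · have hynec : (⟨y.1, hy⟩ : ↥U) ≠ cU := fun h => hyc (congrArg Subtype.val h)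
      have hgap := hPgap ⟨y.1, hy⟩ hynec
      have h1 := hnbp x hx
      rw [hp₂old y hy] at heq
      have : |p ⟨y.1, hy⟩ - pc| ≤ ε / 4 := abs_le.2 ⟨by linarith [h1.1], by linarith [h1.2]⟩
      linarith
  refine ⟨L₂, R₂, p₂, ⟨⟨?_, ?_⟩, ?_⟩, ?_, ?_, ?_⟩
  · -- L₂ ≤ p₂ ≤ R₂
    intro v
    by_cases hv : v.1 ∈ U
    · rw [hp₂old v hv, hL₂old v hv, hR₂old v hv]; exact hin _
    · rw [hp₂new v hv, hL₂new v hv, hR₂new v hv]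
      exact ⟨(haff _ _).2 (hin' _).1, (haff _ _).2 (hin' _).2⟩
  · -- adjacency
    intro u v huv
    exact adjIff u v huv
  · -- midpoints
    intro v
    by_cases hv : v.1 ∈ U
    · rw [hp₂old v hv, hL₂old v hv, hR₂old v hv]; exact hmid _
    · rw [hp₂new v hv, hL₂new v hv, hR₂new v hv, hmid' ⟨v.1, memS v hv⟩]; ring
  · -- injectivity of p₂
    intro u v huv
    by_cases hu : u.1 ∈ U <;> by_cases hv : v.1 ∈ U
    · rw [hp₂old u hu, hp₂old v hv] at huv
      exact Subtype.ext (congrArg (fun z : ↥U => z.1) (hpinj huv))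
    · exact absurd huv.symm (pne v u hv hu)
    · exact absurd huv (pne u v hu hv)
    · rw [hp₂new u hu, hp₂new v hv] at huv
      have h1 : p' ⟨u.1, memS u hu⟩ = p' ⟨v.1, memS v hv⟩ := by
        have := mul_left_cancel₀ hα0.ne'
          (by linarith : α * (p' ⟨u.1, memS u hu⟩ - pc') = α * (p' ⟨v.1, memS v hv⟩ - pc'))
        linarith [this]
      exact Subtype.ext (congrArg (fun z : ↥S => z.1) (hpinj' h1))
  · -- L₂ < R₂
    intro v
    by_cases hv : v.1 ∈ U
    · rw [hL₂old v hv, hR₂old v hv]; exact hLR _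
    · rw [hL₂new v hv, hR₂new v hv]; exact (hafflt _ _).2 (hLR' _)
  · -- strict containment
    intro u v hne hLle hRle
    have hne1 : u.1 ≠ v.1 := fun h => hne (Subtype.ext h)
    by_cases hu : u.1 ∈ U <;> by_cases hv : v.1 ∈ U
    · rw [hp₂old u hu] at hLle hRle ⊢
      rw [hL₂old v hv] at hLle ⊢
      rw [hR₂old v hv] at hRle ⊢
      exact hstrict ⟨u.1, hu⟩ ⟨v.1, hv⟩ (fun h => hne1 (congrArg (fun z : ↥U => z.1) h))
        hLle hRle
    · -- u old, v new
      by_cases huc : u.1 = c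
      · have huU : (⟨u.1, hu⟩ : ↥U) = cU := Subtype.ext huc
        have hpu : p₂ u = pc := by rw [hp₂old u hu, huU]
        have hpceq : α * (pc' - pc') + pc = pc := by ring
        rw [hpu, hL₂new v hv] at hLle
        rw [hpu, hR₂new v hv] at hRle
        have hc1 : L' ⟨v.1, memS v hv⟩ ≤ pc' := (haff _ _).1 (by rw [hpceq]; exact hLle)
        have hc2 : pc' ≤ R' ⟨v.1, memS v hv⟩ := (haff _ _).1 (by rw [hpceq]; exact hRle)
        have hvne : cS ≠ (⟨v.1, memS v hv⟩ : ↥S) := by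
          intro h
          exact hnec v hv (congrArg Subtype.val h).symm
        have := hstrict' cS ⟨v.1, memS v hv⟩ hvne hc1 hc2
        constructor
        · rw [hpu, hL₂new v hv]
          have h := (hafflt (L' ⟨v.1, memS v hv⟩) pc').2 this.1
          rwa [hpceq] at h
        · rw [hpu, hR₂new v hv]
          have h := (hafflt pc' (R' ⟨v.1, memS v hv⟩)).2 this.2
          rwa [hpceq] at h
      · exfalso
        have hunec : (⟨u.1, hu⟩ : ↥U) ≠ cU := fun h => huc (congrArg Subtype.val h)
        have hgap := hPgap ⟨u.1, hu⟩ hunec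
        have h1 := hnbL v hv
        have h2 := hnbR v hv
        rw [hp₂old u hu] at hLle hRle
        have : |p ⟨u.1, hu⟩ - pc| ≤ ε / 4 := abs_le.2 ⟨by linarith, by linarith⟩
        linarith
    · -- u new, v old
      by_cases hvc : v.1 = c
      · have hvU : (⟨v.1, hv⟩ : ↥U) = cU := Subtype.ext hvc
        rw [hL₂old v hv, hR₂old v hv, hvU]
        exact hint u hu
      · have hvnec : (⟨v.1, hv⟩ : ↥U) ≠ cU := fun h => hvc (congrArg Subtype.val h)
        have h1 := hnbp u hu
        rw [hL₂old v hv] at hLle ⊢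
        rw [hR₂old v hv] at hRle ⊢
        by_cases hio : L ⟨v.1, hv⟩ ≤ pc ∧ pc ≤ R ⟨v.1, hv⟩
        · have hst := hstrict cU ⟨v.1, hv⟩ hvnec.symm hio.1 hio.2
          have hLne : L ⟨v.1, hv⟩ ≠ pc := hst.1.ne
          have hRne : R ⟨v.1, hv⟩ ≠ pc := hst.2.ne'
          have hg1 := hLgap ⟨v.1, hv⟩ hLne
          have hg2 := hRgap ⟨v.1, hv⟩ hRne
          rw [abs_of_neg (by linarith : L ⟨v.1, hv⟩ - pc < 0)] at hg1
          rw [abs_of_pos (by linarith : (0:ℝ) < R ⟨v.1, hv⟩ - pc)] at hg2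
          constructor <;> [linarith [h1.1]; linarith [h1.2]]
        · exfalso
          rcases not_and_or.1 hio with h | h
          · have hlt := not_le.1 h
            have hg := hLgap ⟨v.1, hv⟩ (by
              intro hh
              rw [hh] at hlt
              exact lt_irrefl _ hlt)
            rw [abs_of_pos (by linarith : (0:ℝ) < L ⟨v.1, hv⟩ - pc)] at hg
            linarith [h1.2]
          · have hlt := not_le.1 h
            have hg := hRgap ⟨v.1, hv⟩ (by
              intro hh
              rw [hh] at hlt
              exact lt_irrefl _ hlt)
            rw [abs_of_neg (by linarith : R ⟨v.1, hv⟩ - pc < 0)] at hg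
            linarith [h1.1]
    · -- both new
      rw [hp₂new u hu] at hLle hRle ⊢
      rw [hL₂new v hv] at hLle ⊢
      rw [hR₂new v hv] at hRle ⊢
      have hvne : (⟨u.1, memS u hu⟩ : ↥S) ≠ ⟨v.1, memS v hv⟩ :=
        fun h => hne1 (congrArg (fun z : ↥S => z.1) h)
      have := hstrict' ⟨u.1, memS u hu⟩ ⟨v.1, memS v hv⟩ hvne
        ((haff _ _).1 hLle) ((haff _ _).1 hRle)
      exact ⟨(hafflt _ _).2 this.1, (hafflt _ _).2 this.2⟩

set_option maxHeartbeats 2000000 in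
theorem blocks_safe_mem_cand1 {V : Type*} [Fintype V] (G : SimpleGraph V)
    (hconn : G.Connected) (k : ℕ) (blocks : Fin k → Set V)
    (hblock : ∀ i, IsBlockSet G (blocks i))
    (hall : ∀ S : Set V, IsBlockSet G S → ∃ i, blocks i = S)
    (hinj : Function.Injective blocks)
    (hcand : ∀ i, InCAND1 (SimpleGraph.induce (blocks i) G))
    (hsafe : ∀ i : Fin k, 0 < (i : ℕ) → ∃ c : V, ∃ hc : c ∈ blocks i,
      (blocks i ∩ ⋃ j : {j : Fin k // (j : ℕ) < (i : ℕ)}, blocks j) = {c} ∧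
      SafeCAND1 (SimpleGraph.induce (blocks i) G) ⟨c, hc⟩) :
    InCAND1 G := by
  classical
  rcases subsingleton_or_nontrivial V with hV | hV
  · refine ⟨fun _ => 0, fun _ => 0, fun _ => 0, ⟨⟨fun v => ⟨le_refl _, le_refl _⟩, ?_⟩, ?_⟩⟩
    · intro u v huv
      exact absurd (Subsingleton.elim u v) huv
    · intro v; norm_num
  -- the partial unions
  set U : ℕ → Set V := fun n => ⋃ (j : Fin k) (_ : (j : ℕ) < n), blocks j with hU
  have hUmem : ∀ (x : V) (n : ℕ), x ∈ U n ↔ ∃ j : Fin k, (j : ℕ) < n ∧ x ∈ blocks j := by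
    intro x n
    simp only [hU, Set.mem_iUnion]
    constructor
    · rintro ⟨j, hj, hx⟩; exact ⟨j, hj, hx⟩
    · rintro ⟨j, hj, hx⟩; exact ⟨j, hj, hx⟩
  -- the inductive construction
  have main : ∀ n : ℕ, n ≤ k →
      ∃ (L R p : ↥(U n) → ℝ), IsCAND1Real (SimpleGraph.induce (U n) G) L R p ∧
        StrictReal L R p := by
    intro n
    induction n with
    | zero =>
      intro _
      have hU0 : ∀ v : ↥(U 0), False := by
        intro v
        obtain ⟨j, hj, -⟩ := (hUmem v.1 0).1 v.2
        exact Nat.not_lt_zero _ hj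
      refine ⟨fun _ => 0, fun _ => 0, fun _ => 0,
        ⟨⟨fun v => (hU0 v).elim, fun u v _ => (hU0 u).elim⟩, fun v => (hU0 v).elim⟩,
        fun u v _ => (hU0 u).elim, fun v => (hU0 v).elim, fun u v _ _ _ => (hU0 u).elim⟩
    | succ n ih =>
      intro hk1
      have hk : n < k := hk1
      set i : Fin k := ⟨n, hk⟩ with hi
      have hival : (i : ℕ) = n := rfl
      by_cases hn : n = 0
      · -- first block
        subst hn
        have heq : U 1 = blocks i := by
          ext x
          rw [hUmem]
          constructor
          · rintro ⟨j, hj, hx⟩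
            have : j = i := Fin.ext (by omega)
            rwa [← this]
          · intro hx
            exact ⟨i, by omega, hx⟩
        rw [heq]
        obtain ⟨L, R, p, h⟩ := hcand i
        obtain ⟨L', R', p', h1, h2, -⟩ := strictify _ h
        exact ⟨L', R', p', h1, h2⟩
      · -- gluing step
        have hn1 : 0 < n := Nat.pos_of_ne_zero hn
        obtain ⟨c, hc, hcapEq, hsafeC⟩ := hsafe i hn1
        have hUeq : (⋃ j : {j : Fin k // (j : ℕ) < (i : ℕ)}, blocks j) = U n := by
          ext x
          rw [hUmem]
          simp only [Set.mem_iUnion]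
          constructor
          · rintro ⟨⟨j, hj⟩, hx⟩; exact ⟨j, hj, hx⟩
          · rintro ⟨j, hj, hx⟩; exact ⟨⟨j, hj⟩, hx⟩
        rw [hUeq] at hcapEq
        have hcU : c ∈ U n := by
          have : c ∈ blocks i ∩ U n := by rw [hcapEq]; rfl
          exact this.2
        have hcap : U n ∩ blocks i = {c} := by rw [Set.inter_comm]; exact hcapEq
        -- no edges between the new block (minus c) and the old part (minus c)
        have hedge : ∀ u ∈ blocks i, ∀ v ∈ U n, u ≠ c → v ≠ c → ¬ G.Adj u v := by
          intro u huS v hvU hunc hvnc hadjuv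
          have hne : u ≠ v := hadjuv.ne
          obtain ⟨T, hT, hsubT⟩ := exists_block_superset G (edge_biconn G hadjuv)
          obtain ⟨m, hm⟩ := hall T hT
          have huT : u ∈ blocks m := by rw [hm]; exact hsubT (Set.mem_insert _ _)
          have hvT : v ∈ blocks m := by
            rw [hm]; exact hsubT (Set.mem_insert_of_mem _ rfl)
          obtain ⟨j, hj, hvj⟩ := (hUmem v n).1 hvU
          rcases lt_trichotomy (m : ℕ) n with hmn | hmn | hmn
          · have huU : u ∈ U n := (hUmem u n).2 ⟨m, hmn, huT⟩
            have : u ∈ blocks i ∩ U n := ⟨huS, huU⟩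
            rw [hcapEq] at this
            exact hunc this
          · have : m = i := Fin.ext hmn
            rw [this] at hvT
            have : v ∈ blocks i ∩ U n := ⟨hvT, hvU⟩
            rw [hcapEq] at this
            exact hvnc this
          · have hm0 : 0 < (m : ℕ) := lt_trans hn1 hmn
            obtain ⟨c', hc', hcap'', -⟩ := hsafe m hm0
            have hu' : u ∈ blocks m ∩ ⋃ j : {j : Fin k // (j : ℕ) < (m : ℕ)}, blocks j :=
              ⟨huT, Set.mem_iUnion.2 ⟨⟨i, by omega⟩, huS⟩⟩
            have hv' : v ∈ blocks m ∩ ⋃ j : {j : Fin k // (j : ℕ) < (m : ℕ)}, blocks j :=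
              ⟨hvT, Set.mem_iUnion.2 ⟨⟨j, by omega⟩, hvj⟩⟩
            rw [hcap''] at hu' hv'
            exact hne (hu'.trans hv'.symm)
        -- the old realization
        obtain ⟨L, R, p, hold, holds⟩ := ih (le_of_lt hk)
        -- the new (safe) realization, strictified
        obtain ⟨L', R', p', hnew0, hsafe0⟩ := hsafeC
        obtain ⟨L'', R'', p'', hnew, hnews, hiff⟩ := strictify _ hnew0
        have hsafe'' : ∀ w, L'' w ≤ p'' ⟨c, hc⟩ → p'' ⟨c, hc⟩ ≤ R'' w →
            w = ⟨c, hc⟩ ∨ (SimpleGraph.induce (blocks i) G).Adj ⟨c, hc⟩ w := by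
          intro w h1 h2
          obtain ⟨h3, h4⟩ := (hiff ⟨c, hc⟩ w).1 ⟨h1, h2⟩
          exact hsafe0 w h3 h4
        obtain ⟨L₂, R₂, p₂, h1, h2⟩ :=
          glue G (U n) (blocks i) c hcU hc hcap hedge hold holds hnew hnews hsafe''
        have heq : U n ∪ blocks i = U (n + 1) := by
          ext x
          rw [hUmem]
          simp only [Set.mem_union, hUmem]
          constructor
          · rintro (⟨j, hj, hx⟩ | hx)
            · exact ⟨j, by omega, hx⟩
            · exact ⟨i, by omega, hx⟩
          · rintro ⟨j, hj, hx⟩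
            rcases Nat.lt_or_ge (j : ℕ) n with h | h
            · exact Or.inl ⟨j, h, hx⟩
            · have : j = i := Fin.ext (by omega)
              exact Or.inr (this ▸ hx)
        rw [← heq]
        exact ⟨L₂, R₂, p₂, h1, h2⟩
  -- the union of all blocks is everything
  have hUk : U k = Set.univ := by
    ext x
    simp only [Set.mem_univ, iff_true]
    obtain ⟨y, hy⟩ := exists_ne x
    obtain ⟨z, hz⟩ := exists_adj G hconn (hy.symm : x ≠ y)
    obtain ⟨T, hT, hsubT⟩ := exists_block_superset G (edge_biconn G hz)
    obtain ⟨m, hm⟩ := hall T hT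
    exact (hUmem x k).2 ⟨m, m.2, by rw [hm]; exact hsubT (Set.mem_insert _ _)⟩
  obtain ⟨L, R, p, ⟨⟨hin, hadj⟩, hmid⟩, -⟩ := main k (le_refl k)
  have hmemu : ∀ x : V, x ∈ U k := fun x => hUk ▸ Set.mem_univ x
  refine ⟨fun v => L ⟨v, hmemu v⟩, fun v => R ⟨v, hmemu v⟩, fun v => p ⟨v, hmemu v⟩,
    ⟨⟨fun v => hin _, ?_⟩, fun v => hmid _⟩⟩
  intro u v huv
  exact hadj ⟨u, hmemu u⟩ ⟨v, hmemu v⟩ (fun h => huv (congrArg (fun z : ↥(U k) => z.1) h))
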